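/- Let n ≥ 2 and suppose (T_n, Y) is a tiling of the symmetric group S_n. Then for every partition λ = (λ_1,…,λ_ℓ) of n satisfying ∑_{i=1}^{ℓ} λ_i(λ_i − 2i + 1) ≥ 0 (equivalently, the sum of the contents of the boxes of the Young diagram of λ is nonnegative), the set Y is λ-transitive. -/

import Mathlib

/-- `(X, Y)` is a tiling of the group `G`: every element of `G` can be written as `x * y`
for a unique pair `(x, y) ∈ X × Y`. -/
def IsTiling {G : Type*} [Group G] (X Y : Set G) : Prop :=
  ∀ g : G, ∃! p : G × G, p.1 ∈ X ∧ p.2 ∈ Y ∧ p.1 * p.2 = g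

/-- `T n`: the identity together with all transpositions in the symmetric group `S_n`. -/
def transpositionsWithId (n : ℕ) : Set (Equiv.Perm (Fin n)) :=
  {1} ∪ {σ : Equiv.Perm (Fin n) | σ.IsSwap}

open Finset Equiv
open scoped Classical

namespace TilingAux

def Shape (n l : ℕ) (lam : Fin l → ℕ) (Q : Fin l → Finset (Fin n)) : Prop :=
  (∀ i, (Q i).card = lam i) ∧ (∀ i j, i ≠ j → Disjoint (Q i) (Q j)) ∧
    Finset.univ.biUnion Q = Finset.univ

def OSP (n l : ℕ) (lam : Fin l → ℕ) : Type :=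
  {Q : Fin l → Finset (Fin n) // Shape n l lam Q}

noncomputable instance (n l : ℕ) (lam : Fin l → ℕ) : Fintype (OSP n l lam) :=
  Subtype.fintype _

def act {n l : ℕ} (g : Equiv.Perm (Fin n)) (Q : Fin l → Finset (Fin n)) :
    Fin l → Finset (Fin n) := fun i => (Q i).image g

lemma act_mul {n l : ℕ} (g h : Equiv.Perm (Fin n)) (Q : Fin l → Finset (Fin n)) :
    act (g * h) Q = act g (act h Q) := by
  funext i
  simp [act, Finset.image_image, Function.comp]

lemma act_one {n l : ℕ} (Q : Fin l → Finset (Fin n)) : act 1 Q = Q := by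
  funext i; simp [act]

lemma Shape.act {n l : ℕ} {lam : Fin l → ℕ} {Q : Fin l → Finset (Fin n)}
    (hQ : Shape n l lam Q) (g : Equiv.Perm (Fin n)) : Shape n l lam (TilingAux.act g Q) := by
  obtain ⟨h1, h2, h3⟩ := hQ
  refine ⟨fun i => ?_, fun i j hij => ?_, ?_⟩
  · rw [TilingAux.act, Finset.card_image_of_injective _ g.injective, h1]
  · exact Finset.disjoint_image g.injective |>.mpr (h2 i j hij)
  · show (Finset.univ.biUnion fun i => (Q i).image g) = Finset.univ
    rw [← Finset.biUnion_image, h3]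
    exact Finset.image_univ_equiv g

variable {n l : ℕ} {lam : Fin l → ℕ}

def actO (g : Equiv.Perm (Fin n)) (Q : OSP n l lam) : OSP n l lam :=
  ⟨act g Q.1, Q.2.act g⟩

lemma actO_mul (g h : Equiv.Perm (Fin n)) (Q : OSP n l lam) :
    actO (g * h) Q = actO g (actO h Q) := Subtype.ext (act_mul g h Q.1)

lemma actO_one (Q : OSP n l lam) : actO 1 Q = Q := Subtype.ext (act_one Q.1)

lemma existsUnique_block (Q : OSP n l lam) (x : Fin n) : ∃! i, x ∈ Q.1 i := by
  obtain ⟨h1, h2, h3⟩ := Q.2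
  have hx : x ∈ Finset.univ.biUnion Q.1 := by rw [h3]; exact Finset.mem_univ x
  obtain ⟨i, _, hi⟩ := Finset.mem_biUnion.mp hx
  refine ⟨i, hi, fun j hj => ?_⟩
  by_contra hne
  simpa using (h2 j i hne).le_bot (Finset.mem_inter.mpr ⟨hj, hi⟩)

noncomputable def blk (Q : OSP n l lam) (x : Fin n) : Fin l :=
  Fintype.choose _ (existsUnique_block Q x)

lemma blk_mem (Q : OSP n l lam) (x : Fin n) : x ∈ Q.1 (blk Q x) :=
  Fintype.choose_spec _ (existsUnique_block Q x)

lemma blk_eq_of_mem {Q : OSP n l lam} {x : Fin n} {i : Fin l} (h : x ∈ Q.1 i) :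
    blk Q x = i :=
  ((existsUnique_block Q x).unique (blk_mem Q x) h)

/-- transitivity: there is a permutation mapping one OSP to another -/
lemma exists_perm_act (P Q : OSP n l lam) : ∃ g : Equiv.Perm (Fin n), actO g P = Q := by
  have hcard : ∀ i, (P.1 i).card = (Q.1 i).card := fun i => by
    rw [P.2.1 i, Q.2.1 i]
  have e : ∀ i, {x // x ∈ P.1 i} ≃ {x // x ∈ Q.1 i} := fun i =>
    Finset.equivOfCardEq (hcard i)
  set f : Fin n → Fin n := fun x => (e (blk P x) ⟨x, blk_mem P x⟩ : Fin n) with hf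
  have hfeq : ∀ (x : Fin n) (i : Fin l) (hx : x ∈ P.1 i), f x = (e i ⟨x, hx⟩ : Fin n) := by
    intro x i hx
    have hb : blk P x = i := blk_eq_of_mem hx
    subst hb
    rfl
  have hfmem : ∀ (x : Fin n) (i : Fin l), x ∈ P.1 i → f x ∈ Q.1 i := by
    intro x i hx
    rw [hfeq x i hx]
    exact ((e i) ⟨x, hx⟩).2
  have hinj : Function.Injective f := by
    intro x y hxy
    have hx : x ∈ P.1 (blk P x) := blk_mem P x
    have hy : y ∈ P.1 (blk P y) := blk_mem P y
    have hbx : blk P x = blk P y := by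
      by_contra hne
      have h1 : f x ∈ Q.1 (blk P x) := hfmem x _ hx
      have h2 : f y ∈ Q.1 (blk P y) := hfmem y _ hy
      rw [hxy] at h1
      simpa using (Q.2.2.1 _ _ hne).le_bot (Finset.mem_inter.mpr ⟨h1, h2⟩)
    set i := blk P x with hi
    have hy' : y ∈ P.1 i := by rw [hbx]; exact hy
    have h1 : f x = (e i ⟨x, hx⟩ : Fin n) := hfeq x i hx
    have h2 : f y = (e i ⟨y, hy'⟩ : Fin n) := hfeq y i hy'
    rw [h1, h2] at hxy
    have := (e i).injective (Subtype.ext hxy)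
    exact congrArg Subtype.val this
  obtain ⟨g, hg⟩ : ∃ g : Equiv.Perm (Fin n), ∀ x, g x = f x :=
    ⟨Equiv.ofBijective f (Finite.injective_iff_bijective.mp hinj), fun x => rfl⟩
  refine ⟨g, Subtype.ext (funext fun i => ?_)⟩
  show (P.1 i).image g = Q.1 i
  apply Finset.eq_of_subset_of_card_le
  · intro z hz
    obtain ⟨x, hx, rfl⟩ := Finset.mem_image.mp hz
    rw [hg x]
    exact hfmem x i hx
  · rw [Finset.card_image_of_injective _ g.injective, hcard i]

noncomputable def cnt (Y : Set (Equiv.Perm (Fin n))) (P Q : OSP n l lam) : ℕ :=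
  (Finset.univ.filter (fun y : Equiv.Perm (Fin n) => y ∈ Y ∧ actO y P = Q)).card

noncomputable def fullcnt (P Q : OSP n l lam) : ℕ :=
  (Finset.univ.filter (fun g : Equiv.Perm (Fin n) => actO g P = Q)).card

lemma fullcnt_const (P Q P' Q' : OSP n l lam) : fullcnt P Q = fullcnt P' Q' := by
  obtain ⟨a, ha⟩ := exists_perm_act P' P
  obtain ⟨b, hb⟩ := exists_perm_act Q Q'
  unfold fullcnt
  apply Finset.card_nbij' (fun g => b * g * a) (fun g => b⁻¹ * g * a⁻¹)
  · intro g hg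
    simp only [Finset.mem_coe, Finset.mem_filter, Finset.mem_univ, true_and] at hg ⊢
    rw [actO_mul, actO_mul, ha, hg, hb]
  · intro g hg
    simp only [Finset.mem_coe, Finset.mem_filter, Finset.mem_univ, true_and] at hg ⊢
    have hP' : actO a⁻¹ P = P' := by rw [← ha, ← actO_mul, inv_mul_cancel, actO_one]
    rw [actO_mul, actO_mul, hP', hg, ← hb, ← actO_mul, inv_mul_cancel, actO_one]
  · intro g _; group
  · intro g _; group

noncomputable def swapsFin (n : ℕ) : Finset (Equiv.Perm (Fin n)) :=
  Finset.univ.filter Equiv.Perm.IsSwap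

lemma one_not_isSwap : ¬ (1 : Equiv.Perm (Fin n)).IsSwap := by
  rintro ⟨a, b, hab, h⟩
  have := congrArg (fun e : Equiv.Perm (Fin n) => e a) h
  simp [Equiv.swap_apply_left] at this
  exact hab this

lemma inv_eq_self_of_mem {t : Equiv.Perm (Fin n)} (ht : t ∈ transpositionsWithId n) :
    t⁻¹ = t := by
  rcases ht with h | h
  · simp only [Set.mem_singleton_iff] at h; subst h; simp
  · obtain ⟨a, b, _, rfl⟩ := h
    exact Equiv.swap_inv a b

lemma mul_self_of_mem {t : Equiv.Perm (Fin n)} (ht : t ∈ transpositionsWithId n) :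
    t * t = 1 := by
  have h := inv_eq_self_of_mem ht
  calc t * t = t⁻¹ * t := by rw [h]
    _ = 1 := inv_mul_cancel t

lemma actO_invol {t : Equiv.Perm (Fin n)} (ht : t ∈ transpositionsWithId n)
    (Q : OSP n l lam) : actO t (actO t Q) = Q := by
  rw [← actO_mul, mul_self_of_mem ht, actO_one]

lemma tiling_count {Y : Set (Equiv.Perm (Fin n))}
    (hT : IsTiling (transpositionsWithId n) Y) (P Q : OSP n l lam) :
    fullcnt P Q = cnt Y P Q + ∑ t ∈ swapsFin n, cnt Y P (actO t Q) := by
  classical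
  have hmemT : ∀ t : Equiv.Perm (Fin n),
      t ∈ transpositionsWithId n ↔ (t = 1 ∨ t.IsSwap) := by
    intro t
    simp [transpositionsWithId, Set.mem_union, Set.mem_singleton_iff, Set.mem_setOf_eq]
  set TFin : Finset (Equiv.Perm (Fin n)) := insert 1 (swapsFin n) with hTFin
  have hmemTFin : ∀ t, t ∈ TFin ↔ t ∈ transpositionsWithId n := by
    intro t
    simp [hTFin, swapsFin, hmemT]
  set B : Equiv.Perm (Fin n) → Finset (Equiv.Perm (Fin n)) := fun t =>
    (Finset.univ.filter (fun y : Equiv.Perm (Fin n) => y ∈ Y ∧ actO y P = actO t Q)).image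
      (fun y => t * y) with hB
  have hSets : Finset.univ.filter (fun g : Equiv.Perm (Fin n) => actO g P = Q)
      = TFin.biUnion B := by
    apply Finset.ext
    intro g
    simp only [Finset.mem_filter, Finset.mem_univ, true_and, Finset.mem_biUnion]
    constructor
    · intro hg
      obtain ⟨⟨t, y⟩, ⟨ht, hy, hty⟩, _⟩ := hT g
      refine ⟨t, (hmemTFin t).mpr ht, ?_⟩
      rw [hB]
      simp only [Finset.mem_image, Finset.mem_filter, Finset.mem_univ, true_and]
      refine ⟨y, ⟨hy, ?_⟩, hty⟩
      have h1 : actO (t * y) P = Q := by rw [hty]; exact hg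
      rw [actO_mul] at h1
      rw [← h1, actO_invol ht]
    · rintro ⟨t, ht, hg⟩
      rw [hB] at hg
      simp only [Finset.mem_image, Finset.mem_filter, Finset.mem_univ, true_and] at hg
      obtain ⟨y, ⟨_, hy2⟩, rfl⟩ := hg
      rw [actO_mul, hy2, actO_invol ((hmemTFin t).mp ht)]
  have hdisj : ∀ t ∈ TFin, ∀ t' ∈ TFin, t ≠ t' → Disjoint (B t) (B t') := by
    intro t ht t' ht' hne
    rw [Finset.disjoint_left]
    intro g hg hg'
    rw [hB] at hg hg'
    simp only [Finset.mem_image, Finset.mem_filter, Finset.mem_univ, true_and] at hg hg'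
    obtain ⟨y, ⟨hy, hy2⟩, hty⟩ := hg
    obtain ⟨y', ⟨hy', hy2'⟩, hty'⟩ := hg'
    obtain ⟨p, _, huniq⟩ := hT g
    have e1 := huniq (t, y) ⟨(hmemTFin t).mp ht, hy, hty⟩
    have e2 := huniq (t', y') ⟨(hmemTFin t').mp ht', hy', hty'⟩
    have : (t, y) = (t', y') := e1.trans e2.symm
    exact hne (congrArg Prod.fst this)
  have hcard : fullcnt P Q = ∑ t ∈ TFin, (B t).card := by
    rw [fullcnt, hSets]
    exact Finset.card_biUnion hdisj
  have hBcard : ∀ t, (B t).card = cnt Y P (actO t Q) := by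
    intro t
    rw [hB, cnt]
    exact Finset.card_image_of_injective _ (mul_right_injective t)
  rw [hcard, hTFin, Finset.sum_insert (by simp [swapsFin, one_not_isSwap])]
  congr 1
  · rw [hBcard 1]
    congr 1
    exact actO_one Q
  · exact Finset.sum_congr rfl (fun t _ => hBcard t)

lemma mem_image_swap {s : Finset (Fin n)} {a b x : Fin n} :
    x ∈ s.image (Equiv.swap a b) ↔ Equiv.swap a b x ∈ s := by
  constructor
  · rintro h
    obtain ⟨y, hy, rfl⟩ := Finset.mem_image.mp h
    rwa [Equiv.swap_apply_self]
  · intro h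
    exact Finset.mem_image.mpr ⟨_, h, Equiv.swap_apply_self _ _ _⟩

lemma swap_eq_swap_cases {a b c d : Fin n} (hab : a ≠ b) (h : Equiv.swap a b = Equiv.swap c d) :
    (a = c ∧ b = d) ∨ (a = d ∧ b = c) := by
  have hc := congrArg (fun e : Equiv.Perm (Fin n) => e c) h
  have hd := congrArg (fun e : Equiv.Perm (Fin n) => e d) h
  simp only [Equiv.swap_apply_left, Equiv.swap_apply_right] at hc hd
  by_cases h1 : c = a
  · subst h1
    rw [Equiv.swap_apply_left] at hc
    exact Or.inl ⟨rfl, hc⟩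
  · by_cases h2 : c = b
    · subst h2
      rw [Equiv.swap_apply_right] at hc
      exact Or.inr ⟨hc, rfl⟩
    · rw [Equiv.swap_apply_of_ne_of_ne h1 h2] at hc
      exfalso
      rw [← hc, Equiv.swap_self] at h
      have h3 := congrArg (fun e : Equiv.Perm (Fin n) => e a) h
      simp only [Equiv.swap_apply_left, Equiv.coe_refl, id_eq] at h3
      exact hab h3.symm

lemma sum_offDiag_swap (F : Equiv.Perm (Fin n) → ℚ) :
    ∑ p ∈ (Finset.univ : Finset (Fin n)).offDiag, F (Equiv.swap p.1 p.2)
      = ∑ t ∈ swapsFin n, 2 * F t := by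
  have key := Finset.sum_fiberwise_eq_sum_filter
    ((Finset.univ : Finset (Fin n)).offDiag) (swapsFin n)
    (fun p => Equiv.swap p.1 p.2) (fun p => F (Equiv.swap p.1 p.2))
  have h1 : (Finset.univ : Finset (Fin n)).offDiag.filter
      (fun p => Equiv.swap p.1 p.2 ∈ swapsFin n) = (Finset.univ : Finset (Fin n)).offDiag := by
    apply Finset.filter_true_of_mem
    intro p hp
    rw [Finset.mem_offDiag] at hp
    simp only [swapsFin, Finset.mem_filter, Finset.mem_univ, true_and]
    exact ⟨p.1, p.2, hp.2.2, rfl⟩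
  rw [h1] at key
  rw [← key]
  apply Finset.sum_congr rfl
  intro t ht
  simp only [swapsFin, Finset.mem_filter, Finset.mem_univ, true_and] at ht
  obtain ⟨a, b, hab, rfl⟩ := ht
  have hfib : ((Finset.univ : Finset (Fin n)).offDiag.filter
      (fun p => Equiv.swap p.1 p.2 = Equiv.swap a b)) = {(a, b), (b, a)} := by
    apply Finset.ext
    rintro ⟨x, y⟩
    simp only [Finset.mem_filter, Finset.mem_offDiag, Finset.mem_univ, true_and,
      Finset.mem_insert, Finset.mem_singleton, Prod.mk.injEq]
    constructor
    · rintro ⟨hxy, hs⟩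
      rcases swap_eq_swap_cases hxy hs with ⟨h1, h2⟩ | ⟨h1, h2⟩
      · exact Or.inl ⟨h1, h2⟩
      · exact Or.inr ⟨h1, h2⟩
    · rintro (⟨rfl, rfl⟩ | ⟨rfl, rfl⟩)
      · exact ⟨hab, rfl⟩
      · exact ⟨Ne.symm hab, Equiv.swap_comm _ _⟩
  rw [hfib]
  rw [Finset.sum_pair (by intro h; exact hab (congrArg Prod.fst h))]
  rw [Equiv.swap_comm b a]
  ring

lemma mem_block_iff {Q : OSP n l lam} {x : Fin n} {i k : Fin l} (hx : x ∈ Q.1 i) :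
    x ∈ Q.1 k ↔ k = i := by
  constructor
  · intro hk
    by_contra hne
    simpa using (Q.2.2.1 k i hne).le_bot (Finset.mem_inter.mpr ⟨hk, hx⟩)
  · rintro rfl; exact hx

lemma act_swap_same_block {Q : OSP n l lam} {a b : Fin n} {i : Fin l}
    (ha : a ∈ Q.1 i) (hb : b ∈ Q.1 i) : actO (Equiv.swap a b) Q = Q := by
  apply Subtype.ext
  funext k
  show (Q.1 k).image (Equiv.swap a b) = Q.1 k
  apply Finset.ext
  intro x
  rw [mem_image_swap]
  rcases eq_or_ne x a with rfl | hxa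
  · rw [Equiv.swap_apply_left, mem_block_iff hb, mem_block_iff ha]
  · rcases eq_or_ne x b with rfl | hxb
    · rw [Equiv.swap_apply_right, mem_block_iff ha, mem_block_iff hb]
    · rw [Equiv.swap_apply_of_ne_of_ne hxa hxb]

section Gram

variable {i j : Fin l} {Q : OSP n l lam} {b b' : Fin n}

lemma img_i (hij : i ≠ j) (hb : b ∈ Q.1 j) (hb' : b' ∈ Q.1 i) :
    (Q.1 i).image (Equiv.swap b' b) = (insert b (Q.1 i)).erase b' := by
  have hbi : b ∉ Q.1 i := fun h => hij ((mem_block_iff hb).mp h)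
  apply Finset.ext
  intro x
  rw [mem_image_swap, Finset.mem_erase, Finset.mem_insert]
  rcases eq_or_ne x b' with rfl | hx1
  · rw [Equiv.swap_apply_left]
    simp [hbi]
  · rcases eq_or_ne x b with rfl | hx2
    · rw [Equiv.swap_apply_right]
      simp [hx1, hb']
    · rw [Equiv.swap_apply_of_ne_of_ne hx1 hx2]
      simp [hx1, hx2]

lemma img_j (hij : i ≠ j) (hb : b ∈ Q.1 j) (hb' : b' ∈ Q.1 i) :
    (Q.1 j).image (Equiv.swap b' b) = insert b' ((Q.1 j).erase b) := by
  have hb'j : b' ∉ Q.1 j := fun h => hij ((mem_block_iff hb').mp h).symm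
  apply Finset.ext
  intro x
  rw [mem_image_swap, Finset.mem_insert, Finset.mem_erase]
  rcases eq_or_ne x b' with rfl | hx1
  · rw [Equiv.swap_apply_left]
    simp [hb]
  · rcases eq_or_ne x b with rfl | hx2
    · rw [Equiv.swap_apply_right]
      simp [hx1, hb'j]
    · rw [Equiv.swap_apply_of_ne_of_ne hx1 hx2]
      simp [hx1, hx2]

lemma img_k (hb : b ∈ Q.1 j) (hb' : b' ∈ Q.1 i) {k : Fin l} (hki : k ≠ i) (hkj : k ≠ j) :
    (Q.1 k).image (Equiv.swap b' b) = Q.1 k := by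
  have h1 : b ∉ Q.1 k := fun h => hkj ((mem_block_iff hb).mp h)
  have h2 : b' ∉ Q.1 k := fun h => hki ((mem_block_iff hb').mp h)
  apply Finset.ext
  intro x
  rw [mem_image_swap]
  rcases eq_or_ne x b' with rfl | hx1
  · rw [Equiv.swap_apply_left]
    simp [h1, h2]
  · rcases eq_or_ne x b with rfl | hx2
    · rw [Equiv.swap_apply_right]
      simp [h1, h2]
    · rw [Equiv.swap_apply_of_ne_of_ne hx1 hx2]

def mv (i j : Fin l) (Q : OSP n l lam) (b : Fin n) : Fin l → Finset (Fin n) :=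
  fun k => if k = i then insert b (Q.1 i) else if k = j then (Q.1 j).erase b else Q.1 k

lemma fiber_iff (hij : i ≠ j) (hb : b ∈ Q.1 j) {Q' : OSP n l lam} (hb' : b' ∈ Q'.1 j) :
    mv i j Q' b' = mv i j Q b ↔
      ((Q' = Q ∧ b' = b) ∨ (b' ∈ Q.1 i ∧ Q' = actO (Equiv.swap b' b) Q)) := by
  have hbQi : b ∉ Q.1 i := fun h => hij ((mem_block_iff hb).mp h)
  have hb'Q'i : b' ∉ Q'.1 i := fun h => hij ((mem_block_iff hb').mp h)
  constructor
  · intro hm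
    have Ei : insert b' (Q'.1 i) = insert b (Q.1 i) := by
      have := congrFun hm i
      simpa [mv] using this
    have Ej : (Q'.1 j).erase b' = (Q.1 j).erase b := by
      have := congrFun hm j
      simpa [mv, Ne.symm hij] using this
    have Ek : ∀ k : Fin l, k ≠ i → k ≠ j → Q'.1 k = Q.1 k := by
      intro k hki hkj
      have := congrFun hm k
      simpa [mv, hki, hkj] using this
    by_cases hbb : b' = b
    · subst hbb
      left
      refine ⟨Subtype.ext (funext fun k => ?_), rfl⟩
      by_cases hk : k = i
      · subst hk
        have := congrArg (fun s => Finset.erase s b') Ei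
        simpa [Finset.erase_insert hb'Q'i, Finset.erase_insert hbQi] using this
      · by_cases hk2 : k = j
        · subst hk2
          calc Q'.1 k = insert b' ((Q'.1 k).erase b') := (Finset.insert_erase hb').symm
            _ = insert b' ((Q.1 k).erase b') := by rw [Ej]
            _ = Q.1 k := Finset.insert_erase hb
        · exact Ek k hk hk2
    · right
      have hb'mem : b' ∈ Q.1 i := by
        have h1 : b' ∈ insert b (Q.1 i) := Ei ▸ Finset.mem_insert_self b' (Q'.1 i)
        exact (Finset.mem_insert.mp h1).resolve_left hbb
      refine ⟨hb'mem, Subtype.ext (funext fun k => ?_)⟩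
      show Q'.1 k = (Q.1 k).image (Equiv.swap b' b)
      by_cases hk : k = i
      · subst hk
        rw [img_i hij hb hb'mem, ← Ei, Finset.erase_insert hb'Q'i]
      · by_cases hk2 : k = j
        · subst hk2
          rw [img_j hij hb hb'mem, ← Ej, Finset.insert_erase hb']
        · rw [img_k hb hb'mem hk hk2]
          exact Ek k hk hk2
  · rintro (⟨rfl, rfl⟩ | ⟨hb'mem, rfl⟩)
    · rfl
    · have hb'Qj : b' ∉ Q.1 j := fun h => hij ((mem_block_iff hb'mem).mp h).symm
      funext k
      show mv i j (actO (Equiv.swap b' b) Q) b' k = mv i j Q b k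
      by_cases hk : k = i
      · subst hk
        simp only [mv, if_pos rfl]
        show insert b' ((Q.1 k).image (Equiv.swap b' b)) = insert b (Q.1 k)
        rw [img_i hij hb hb'mem,
          Finset.insert_erase (Finset.mem_insert_of_mem hb'mem)]
      · by_cases hk2 : k = j
        · subst hk2
          simp only [mv, if_neg hk, if_pos rfl]
          show ((Q.1 k).image (Equiv.swap b' b)).erase b' = (Q.1 k).erase b
          rw [img_j hij hb hb'mem, Finset.erase_insert (fun h => hb'Qj (Finset.mem_of_mem_erase h))]
        · simp only [mv, if_neg hk, if_neg hk2]
          show (Q.1 k).image (Equiv.swap b' b) = Q.1 k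
          exact img_k hb hb'mem hk hk2

lemma sum_indicator {M : Type*} [AddCommMonoid M] {α : Type*} [Fintype α] [DecidableEq α]
    (s : Finset α) (f : α → M) :
    ∑ x ∈ s, f x = ∑ x : α, if x ∈ s then f x else 0 := by
  rw [Finset.sum_ite_mem, Finset.univ_inter]

lemma gram_ineq (i j : Fin l) (hij : i ≠ j) (G : OSP n l lam → ℚ) :
    0 ≤ (lam j : ℚ) * ∑ Q : OSP n l lam, G Q ^ 2
      + ∑ Q : OSP n l lam, ∑ b ∈ Q.1 j, ∑ a ∈ Q.1 i, G Q * G (actO (Equiv.swap a b) Q) := by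
  have key : (lam j : ℚ) * ∑ Q : OSP n l lam, G Q ^ 2
      + ∑ Q : OSP n l lam, ∑ b ∈ Q.1 j, ∑ a ∈ Q.1 i, G Q * G (actO (Equiv.swap a b) Q)
      = ∑ R : Fin l → Finset (Fin n),
          (∑ Q : OSP n l lam, ∑ b ∈ Q.1 j, (if mv i j Q b = R then G Q else 0)) ^ 2 := by
    have step1 : ∀ R : Fin l → Finset (Fin n),
        (∑ Q : OSP n l lam, ∑ b ∈ Q.1 j, (if mv i j Q b = R then G Q else 0)) ^ 2
        = ∑ Q : OSP n l lam, ∑ Q' : OSP n l lam, ∑ b ∈ Q.1 j, ∑ b' ∈ Q'.1 j,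
            (if mv i j Q b = R then G Q else 0) * (if mv i j Q' b' = R then G Q' else 0) := by
      intro R
      rw [sq, Finset.sum_mul_sum]
      apply Finset.sum_congr rfl
      intro Q _
      apply Finset.sum_congr rfl
      intro Q' _
      rw [Finset.sum_mul_sum]
    rw [Finset.sum_congr rfl (fun R _ => step1 R)]
    rw [Finset.sum_comm]
    have step2 : ∀ Q : OSP n l lam,
        (∑ R : Fin l → Finset (Fin n), ∑ Q' : OSP n l lam, ∑ b ∈ Q.1 j, ∑ b' ∈ Q'.1 j,
          (if mv i j Q b = R then G Q else 0) * (if mv i j Q' b' = R then G Q' else 0))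
        = ∑ b ∈ Q.1 j, (G Q * G Q
            + ∑ a ∈ Q.1 i, G Q * G (actO (Equiv.swap a b) Q)) := by
      intro Q
      rw [Finset.sum_comm]
      have step3 : ∀ Q' : OSP n l lam,
          (∑ R : Fin l → Finset (Fin n), ∑ b ∈ Q.1 j, ∑ b' ∈ Q'.1 j,
            (if mv i j Q b = R then G Q else 0) * (if mv i j Q' b' = R then G Q' else 0))
          = ∑ b ∈ Q.1 j, ∑ b' ∈ Q'.1 j,
              (if mv i j Q' b' = mv i j Q b then G Q * G Q' else 0) := by
        intro Q'
        rw [Finset.sum_comm]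
        apply Finset.sum_congr rfl
        intro b _
        rw [Finset.sum_comm]
        apply Finset.sum_congr rfl
        intro b' _
        simp only [ite_mul, zero_mul, mul_ite, mul_zero]
        rw [Finset.sum_ite_eq]
        simp only [Finset.mem_univ, if_true]
        by_cases h : mv i j Q' b' = mv i j Q b
        · rw [if_pos h.symm, if_pos h]
        · rw [if_neg (fun e => h e.symm), if_neg h]
      rw [Finset.sum_congr rfl (fun Q' _ => step3 Q')]
      rw [Finset.sum_comm]
      apply Finset.sum_congr rfl
      intro b hb
      have split : ∀ (Q' : OSP n l lam), ∀ b' ∈ Q'.1 j,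
          (if mv i j Q' b' = mv i j Q b then G Q * G Q' else 0)
          = (if Q' = Q ∧ b' = b then G Q * G Q' else 0)
            + (if b' ∈ Q.1 i ∧ Q' = actO (Equiv.swap b' b) Q then G Q * G Q' else 0) := by
        intro Q' b' hb'
        rw [if_congr (fiber_iff hij hb hb') rfl rfl]
        by_cases h1 : Q' = Q ∧ b' = b
        · have h2 : ¬ (b' ∈ Q.1 i ∧ Q' = actO (Equiv.swap b' b) Q) := by
            rintro ⟨hmem, -⟩
            obtain ⟨rfl, rfl⟩ := h1
            exact hij ((mem_block_iff hmem).mp hb).symm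
          rw [if_pos (Or.inl h1), if_pos h1, if_neg h2, add_zero]
        · by_cases h2 : b' ∈ Q.1 i ∧ Q' = actO (Equiv.swap b' b) Q
          · rw [if_pos (Or.inr h2), if_neg h1, if_pos h2, zero_add]
          · rw [if_neg (by rintro (h | h); exacts [h1 h, h2 h]), if_neg h1, if_neg h2, add_zero]
      rw [Finset.sum_congr rfl (fun Q' _ => Finset.sum_congr rfl (fun b' hb' => split Q' b' hb'))]
      simp only [Finset.sum_add_distrib]
      congr 1
      · -- diagonal term
        rw [Finset.sum_eq_single Q]
        · have hsimp : ∀ b' ∈ Q.1 j, (if (Q = Q ∧ b' = b) then G Q * G Q else 0)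
              = if b' = b then G Q * G Q else 0 := by
            intro b' _
            by_cases h : b' = b <;> simp [h]
          rw [Finset.sum_congr rfl hsimp,
            Finset.sum_ite_eq' (Q.1 j) b (fun _ => G Q * G Q), if_pos hb]
        · intro Q' _ hQ'
          exact Finset.sum_eq_zero (fun b' _ => if_neg (fun h => hQ' h.1))
        · intro h
          exact absurd (Finset.mem_univ Q) h
      · -- cross term
        have inner : ∀ Q' : OSP n l lam, (∑ b' ∈ Q'.1 j,
            if b' ∈ Q.1 i ∧ Q' = actO (Equiv.swap b' b) Q then G Q * G Q' else 0)
            = ∑ b' : Fin n, (if b' ∈ Q'.1 j then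
                (if b' ∈ Q.1 i ∧ Q' = actO (Equiv.swap b' b) Q then G Q * G Q' else 0) else 0) :=
          fun Q' => sum_indicator _ _
        rw [Finset.sum_congr rfl (fun Q' _ => inner Q')]
        rw [Finset.sum_comm]
        have inner2 : ∀ a : Fin n, (∑ Q' : OSP n l lam,
            if a ∈ Q'.1 j then
              (if a ∈ Q.1 i ∧ Q' = actO (Equiv.swap a b) Q then G Q * G Q' else 0) else 0)
            = if a ∈ Q.1 i then G Q * G (actO (Equiv.swap a b) Q) else 0 := by
          intro a
          rw [Finset.sum_eq_single (actO (Equiv.swap a b) Q)]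
          · by_cases hmem : a ∈ Q.1 i
            · have haj : a ∈ (actO (Equiv.swap a b) Q).1 j := by
                show a ∈ (Q.1 j).image (Equiv.swap a b)
                rw [img_j hij hb hmem]
                exact Finset.mem_insert_self _ _
              rw [if_pos haj, if_pos ⟨hmem, rfl⟩, if_pos hmem]
            · rw [if_neg hmem]
              by_cases haj : a ∈ (actO (Equiv.swap a b) Q).1 j
              · rw [if_pos haj, if_neg (fun h => hmem h.1)]
              · rw [if_neg haj]
          · intro Q' _ hQ'
            by_cases h1 : a ∈ Q'.1 j
            · rw [if_pos h1, if_neg (fun h => hQ' h.2)]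
            · rw [if_neg h1]
          · intro h
            exact absurd (Finset.mem_univ _) h
        rw [Finset.sum_congr rfl (fun a _ => inner2 a), ← sum_indicator]
    rw [Finset.sum_congr rfl (fun Q _ => step2 Q)]
    simp only [Finset.sum_add_distrib]
    have hdiag : (lam j : ℚ) * ∑ Q : OSP n l lam, G Q ^ 2
        = ∑ Q : OSP n l lam, ∑ _b ∈ Q.1 j, G Q * G Q := by
      rw [Finset.mul_sum]
      apply Finset.sum_congr rfl
      intro Q _
      rw [Finset.sum_const, Q.2.1 j, nsmul_eq_mul, sq]
    rw [hdiag]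
  rw [key]
  apply Finset.sum_nonneg
  intro R _
  exact sq_nonneg _

lemma sum_offDiag_pair {M : Type*} [AddCommMonoid M] (f : Fin n → Fin n → M) :
    ∑ p ∈ (Finset.univ : Finset (Fin n)).offDiag, f p.1 p.2
      = ∑ a : Fin n, ∑ b : Fin n, if a = b then 0 else f a b := by
  have h1 : (Finset.univ : Finset (Fin n)).offDiag
      = (Finset.univ ×ˢ Finset.univ).filter (fun p : Fin n × Fin n => ¬ p.1 = p.2) := by
    apply Finset.ext
    intro p
    simp [Finset.mem_offDiag]
  rw [h1, Finset.sum_filter, Finset.sum_product]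
  apply Finset.sum_congr rfl
  intro a _
  apply Finset.sum_congr rfl
  intro b _
  by_cases h : a = b <;> simp [h]

lemma sum_partition {M : Type*} [AddCommMonoid M] (Q : OSP n l lam) (φ : Fin n → M) :
    ∑ a : Fin n, φ a = ∑ i' : Fin l, ∑ a ∈ Q.1 i', φ a := by
  conv_lhs => rw [show (Finset.univ : Finset (Fin n)) = Finset.univ.biUnion Q.1 from Q.2.2.2.symm]
  exact Finset.sum_biUnion (fun x _ y _ hxy => Q.2.2.1 x y hxy)

/-- The cross term `T i j`. -/
noncomputable def crossT (G : OSP n l lam → ℚ) (i j : Fin l) : ℚ :=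
  ∑ Q : OSP n l lam, ∑ a ∈ Q.1 i, ∑ b ∈ Q.1 j,
    (if a = b then 0 else G Q * G (actO (Equiv.swap a b) Q))

lemma crossT_diag (G : OSP n l lam → ℚ) (i : Fin l) :
    crossT G i i = ((lam i : ℚ) ^ 2 - lam i) * ∑ Q : OSP n l lam, G Q ^ 2 := by
  unfold crossT
  have hQterm : ∀ Q : OSP n l lam, (∑ a ∈ Q.1 i, ∑ b ∈ Q.1 i,
      (if a = b then 0 else G Q * G (actO (Equiv.swap a b) Q)))
      = ((lam i : ℚ) ^ 2 - lam i) * G Q ^ 2 := by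
    intro Q
    have h1 : ∀ a ∈ Q.1 i, ∀ b ∈ Q.1 i,
        (if a = b then 0 else G Q * G (actO (Equiv.swap a b) Q))
        = (if a = b then 0 else G Q * G Q) := by
      intro a ha b hb
      by_cases h : a = b
      · simp [h]
      · rw [if_neg h, if_neg h, act_swap_same_block ha hb]
    rw [Finset.sum_congr rfl (fun a ha => Finset.sum_congr rfl (fun b hb => h1 a ha b hb))]
    have h2 : ∀ a ∈ Q.1 i, (∑ b ∈ Q.1 i, if a = b then 0 else G Q * G Q)
        = ((lam i : ℚ) - 1) * (G Q * G Q) := by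
      intro a ha
      have h3 : ∀ b ∈ Q.1 i, (if a = b then (0:ℚ) else G Q * G Q)
          = G Q * G Q - (if a = b then G Q * G Q else 0) := by
        intro b _
        by_cases h : a = b <;> simp [h]
      rw [Finset.sum_congr rfl h3, Finset.sum_sub_distrib, Finset.sum_ite_eq, if_pos ha,
        Finset.sum_const, Q.2.1 i, nsmul_eq_mul]
      ring
    rw [Finset.sum_congr rfl h2, Finset.sum_const, Q.2.1 i, nsmul_eq_mul]
    ring
  rw [Finset.sum_congr rfl (fun Q _ => hQterm Q), Finset.mul_sum]

lemma crossT_symm (G : OSP n l lam → ℚ) (i j : Fin l) : crossT G i j = crossT G j i := by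
  unfold crossT
  apply Finset.sum_congr rfl
  intro Q _
  rw [Finset.sum_comm]
  apply Finset.sum_congr rfl
  intro b _
  apply Finset.sum_congr rfl
  intro a _
  rw [Equiv.swap_comm]
  by_cases h : a = b
  · rw [if_pos h, if_pos h.symm]
  · rw [if_neg h, if_neg (fun e => h e.symm)]

lemma crossT_ge (G : OSP n l lam → ℚ) (i j : Fin l) (hij : i ≠ j) :
    -(lam j : ℚ) * ∑ Q : OSP n l lam, G Q ^ 2 ≤ crossT G i j := by
  have h := gram_ineq i j hij G
  have he : crossT G i j = ∑ Q : OSP n l lam, ∑ b ∈ Q.1 j, ∑ a ∈ Q.1 i,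
      G Q * G (actO (Equiv.swap a b) Q) := by
    unfold crossT
    apply Finset.sum_congr rfl
    intro Q _
    rw [Finset.sum_comm]
    apply Finset.sum_congr rfl
    intro b hb
    apply Finset.sum_congr rfl
    intro a ha
    rw [if_neg]
    intro hab
    subst hab
    exact hij ((mem_block_iff ha).mp hb).symm
  rw [he]
  linarith

lemma crossT_ge_max (G : OSP n l lam → ℚ) (i j : Fin l) (hij : i ≠ j) :
    -(lam (max i j) : ℚ) * ∑ Q : OSP n l lam, G Q ^ 2 ≤ crossT G i j := by
  rcases lt_or_gt_of_ne hij with h | h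
  · rw [max_eq_right h.le]
    exact crossT_ge G i j hij
  · rw [max_eq_left h.le, crossT_symm]
    exact crossT_ge G j i (Ne.symm hij)

lemma quad_decomp (G : OSP n l lam → ℚ) :
    ∑ p ∈ (Finset.univ : Finset (Fin n)).offDiag,
        ∑ Q : OSP n l lam, G Q * G (actO (Equiv.swap p.1 p.2) Q)
      = ∑ i' : Fin l, ∑ j' : Fin l, crossT G i' j' := by
  rw [Finset.sum_comm]
  have h1 : ∀ Q : OSP n l lam,
      (∑ p ∈ (Finset.univ : Finset (Fin n)).offDiag, G Q * G (actO (Equiv.swap p.1 p.2) Q))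
      = ∑ i' : Fin l, ∑ a ∈ Q.1 i', ∑ j' : Fin l, ∑ b ∈ Q.1 j',
          (if a = b then 0 else G Q * G (actO (Equiv.swap a b) Q)) := by
    intro Q
    rw [sum_offDiag_pair (fun a b => G Q * G (actO (Equiv.swap a b) Q))]
    rw [sum_partition Q]
    apply Finset.sum_congr rfl
    intro i' _
    apply Finset.sum_congr rfl
    intro a _
    exact sum_partition Q _
  rw [Finset.sum_congr rfl (fun Q _ => h1 Q)]
  rw [Finset.sum_comm]
  apply Finset.sum_congr rfl
  intro i' _
  unfold crossT
  rw [Finset.sum_comm]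
  apply Finset.sum_congr rfl
  intro Q _
  exact Finset.sum_comm

lemma weight_sum : ∑ i' : Fin l, ∑ j' ∈ Finset.univ.erase i', (lam (max i' j') : ℚ)
    = ∑ i' : Fin l, 2 * (i' : ℕ) * (lam i' : ℚ) := by
  have hsplit : ∀ i' : Fin l, (Finset.univ.erase i' : Finset (Fin l))
      = (Finset.Iio i') ∪ (Finset.Ioi i') := by
    intro i'
    apply Finset.ext
    intro x
    simp only [Finset.mem_erase, Finset.mem_univ, and_true, Finset.mem_union,
      Finset.mem_Iio, Finset.mem_Ioi]
    exact ne_iff_lt_or_gt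
  have hdisj : ∀ i' : Fin l, Disjoint (Finset.Iio i') (Finset.Ioi i') := by
    intro i'
    rw [Finset.disjoint_left]
    intro x hx hx2
    rw [Finset.mem_Iio] at hx
    rw [Finset.mem_Ioi] at hx2
    exact absurd (hx.trans hx2) (lt_irrefl x)
  have step : ∀ i' : Fin l, (∑ j' ∈ Finset.univ.erase i', (lam (max i' j') : ℚ))
      = (i' : ℕ) * (lam i' : ℚ) + ∑ j' ∈ Finset.Ioi i', (lam j' : ℚ) := by
    intro i'
    rw [hsplit i', Finset.sum_union (hdisj i')]
    congr 1
    · have : ∀ j' ∈ Finset.Iio i', (lam (max i' j') : ℚ) = (lam i' : ℚ) := by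
        intro j' hj'
        rw [Finset.mem_Iio] at hj'
        rw [max_eq_left hj'.le]
      rw [Finset.sum_congr rfl this, Finset.sum_const, Fin.card_Iio, nsmul_eq_mul]
    · apply Finset.sum_congr rfl
      intro j' hj'
      rw [Finset.mem_Ioi] at hj'
      rw [max_eq_right hj'.le]
  rw [Finset.sum_congr rfl (fun i' _ => step i'), Finset.sum_add_distrib]
  have hswap : (∑ i' : Fin l, ∑ j' ∈ Finset.Ioi i', (lam j' : ℚ))
      = ∑ j' : Fin l, (j' : ℕ) * (lam j' : ℚ) := by
    rw [Finset.sum_comm' (t' := Finset.univ) (s' := fun j' => Finset.Iio j')]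
    · apply Finset.sum_congr rfl
      intro j' _
      rw [Finset.sum_const, Fin.card_Iio, nsmul_eq_mul]
    · intro x y
      simp [Finset.mem_Ioi, Finset.mem_Iio]
  rw [hswap, ← Finset.sum_add_distrib]
  apply Finset.sum_congr rfl
  intro i' _
  ring

lemma quad_bound (G : OSP n l lam → ℚ) :
    (∑ i : Fin l, (lam i : ℚ) * ((lam i : ℚ) - 2 * ((i : ℕ) : ℚ) - 1))
        * (∑ Q : OSP n l lam, G Q ^ 2)
    ≤ ∑ p ∈ (Finset.univ : Finset (Fin n)).offDiag,
        ∑ Q : OSP n l lam, G Q * G (actO (Equiv.swap p.1 p.2) Q) := by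
  set S := ∑ Q : OSP n l lam, G Q ^ 2 with hS
  have hS0 : 0 ≤ S := Finset.sum_nonneg (fun Q _ => sq_nonneg _)
  rw [quad_decomp G]
  have hrow : ∀ i' : Fin l,
      ((lam i' : ℚ) ^ 2 - lam i') * S - (∑ j' ∈ Finset.univ.erase i', (lam (max i' j') : ℚ)) * S
      ≤ ∑ j' : Fin l, crossT G i' j' := by
    intro i'
    rw [← Finset.sum_erase_add Finset.univ _ (Finset.mem_univ i'), crossT_diag]
    have hbound : ∀ j' ∈ Finset.univ.erase i',
        -(lam (max i' j') : ℚ) * S ≤ crossT G i' j' := by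
      intro j' hj'
      exact crossT_ge_max G i' j' ((Finset.mem_erase.mp hj').1).symm
    have := Finset.sum_le_sum hbound
    have hlhs : (∑ j' ∈ Finset.univ.erase i', -(lam (max i' j') : ℚ) * S)
        = -(∑ j' ∈ Finset.univ.erase i', (lam (max i' j') : ℚ)) * S := by
      rw [← Finset.sum_mul, Finset.sum_neg_distrib]
    rw [hlhs] at this
    linarith
  have htotal := Finset.sum_le_sum (fun i' (_ : i' ∈ Finset.univ) => hrow i')
  refine le_trans ?_ htotal
  rw [Finset.sum_sub_distrib, ← Finset.sum_mul, ← Finset.sum_mul, weight_sum, ← sub_mul]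
  apply mul_le_mul_of_nonneg_right _ hS0
  apply le_of_eq
  rw [← Finset.sum_sub_distrib]
  apply Finset.sum_congr rfl
  intro i _
  ring

end Gram

lemma cnt_total (Y : Set (Equiv.Perm (Fin n))) (P : OSP n l lam) :
    ∑ Q : OSP n l lam, cnt Y P Q
      = (Finset.univ.filter (fun y : Equiv.Perm (Fin n) => y ∈ Y)).card := by
  rw [Finset.card_eq_sum_card_fiberwise
    (f := fun y => actO y P) (t := Finset.univ) (fun y _ => Finset.mem_univ _)]
  apply Finset.sum_congr rfl
  intro Q _
  rw [cnt, Finset.filter_filter]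

lemma cnt_const {Y : Set (Equiv.Perm (Fin n))}
    (hT : IsTiling (transpositionsWithId n) Y)
    (hcont : 0 ≤ ∑ i : Fin l, (lam i : ℚ) * ((lam i : ℚ) - 2 * ((i : ℕ) : ℚ) - 1))
    (P Q Q' : OSP n l lam) : cnt Y P Q = cnt Y P Q' := by
  set c0 : ℕ := fullcnt P P with hc0
  have hident : ∀ R : OSP n l lam,
      (c0 : ℚ) = (cnt Y P R : ℚ) + ∑ t ∈ swapsFin n, (cnt Y P (actO t R) : ℚ) := by
    intro R
    have := tiling_count hT P R
    rw [fullcnt_const P R P P, ← hc0] at this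
    exact_mod_cast this
  set D : ℚ := ((Finset.univ : Finset (Fin n)).offDiag.card : ℚ) with hD
  have hD0 : 0 ≤ D := by positivity
  have hDpos : (0:ℚ) < 2 + D := by linarith
  set r0 : ℚ := 2 * c0 / (2 + D) with hr0
  set F : OSP n l lam → ℚ := fun R => (cnt Y P R : ℚ) with hF
  set G : OSP n l lam → ℚ := fun R => F R - r0 with hG
  have hident2 : ∀ R : OSP n l lam,
      2 * F R + ∑ p ∈ (Finset.univ : Finset (Fin n)).offDiag,
        F (actO (Equiv.swap p.1 p.2) R) = 2 * c0 := by
    intro R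
    have h1 := hident R
    have h2 : ∑ p ∈ (Finset.univ : Finset (Fin n)).offDiag, F (actO (Equiv.swap p.1 p.2) R)
        = ∑ t ∈ swapsFin n, 2 * F (actO t R) :=
      sum_offDiag_swap (fun t => F (actO t R))
    rw [h2, ← Finset.mul_sum]
    show 2 * F R + 2 * ∑ t ∈ swapsFin n, (cnt Y P (actO t R) : ℚ) = 2 * c0
    rw [hF]
    simp only []
    linarith [h1]
  have hidentG : ∀ R : OSP n l lam,
      2 * G R + ∑ p ∈ (Finset.univ : Finset (Fin n)).offDiag,
        G (actO (Equiv.swap p.1 p.2) R) = 0 := by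
    intro R
    have h1 := hident2 R
    rw [hG]
    simp only []
    rw [Finset.sum_sub_distrib, Finset.sum_const, nsmul_eq_mul, ← hD]
    have hr : (2 + D) * r0 = 2 * c0 := by
      rw [hr0, mul_div_cancel₀ _ (ne_of_gt hDpos)]
    have hr' : 2 * r0 + D * r0 = 2 * c0 := by
      calc 2 * r0 + D * r0 = (2 + D) * r0 := by ring
        _ = 2 * c0 := hr
    linarith [h1, hr']
  -- sum against G
  have hsum0 : 2 * (∑ R : OSP n l lam, G R ^ 2)
      + ∑ p ∈ (Finset.univ : Finset (Fin n)).offDiag,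
          ∑ R : OSP n l lam, G R * G (actO (Equiv.swap p.1 p.2) R) = 0 := by
    have h1 : ∑ R : OSP n l lam,
        (G R * (2 * G R + ∑ p ∈ (Finset.univ : Finset (Fin n)).offDiag,
          G (actO (Equiv.swap p.1 p.2) R))) = 0 := by
      apply Finset.sum_eq_zero
      intro R _
      rw [hidentG R, mul_zero]
    have h2 : ∀ R : OSP n l lam,
        G R * (2 * G R + ∑ p ∈ (Finset.univ : Finset (Fin n)).offDiag,
          G (actO (Equiv.swap p.1 p.2) R))
        = 2 * G R ^ 2 + ∑ p ∈ (Finset.univ : Finset (Fin n)).offDiag,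
            G R * G (actO (Equiv.swap p.1 p.2) R) := by
      intro R
      rw [mul_add, Finset.mul_sum, sq]
      ring
    rw [Finset.sum_congr rfl (fun R _ => h2 R), Finset.sum_add_distrib, ← Finset.mul_sum,
      Finset.sum_comm] at h1
    exact h1
  have hquad := quad_bound (lam := lam) G
  have hG2 : ∑ R : OSP n l lam, G R ^ 2 = 0 := by
    have hnn : 0 ≤ ∑ R : OSP n l lam, G R ^ 2 :=
      Finset.sum_nonneg (fun R _ => sq_nonneg _)
    nlinarith [mul_nonneg hcont hnn]
  have hGzero : ∀ R : OSP n l lam, G R = 0 := by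
    intro R
    have := (Finset.sum_eq_zero_iff_of_nonneg
      (fun R (_ : R ∈ Finset.univ) => sq_nonneg (G R))).mp hG2 R (Finset.mem_univ R)
    exact pow_eq_zero_iff (two_ne_zero) |>.mp this
  have hFQ : F Q = F Q' := by
    have h1 := hGzero Q
    have h2 := hGzero Q'
    rw [hG] at h1 h2
    simp only [] at h1 h2
    linarith
  rw [hF] at hFQ
  simp only [] at hFQ
  exact_mod_cast hFQ

end TilingAux

theorem lambda_transitive_of_tiling (n : ℕ) (hn : 2 ≤ n)
    (Y : Set (Equiv.Perm (Fin n))) (hT : IsTiling (transpositionsWithId n) Y)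
    (l : ℕ) (lam : Fin l → ℕ)
    (hmono : ∀ i j : Fin l, i ≤ j → lam j ≤ lam i)
    (hpos : ∀ i, 0 < lam i)
    (hsum : ∑ i, lam i = n)
    (hcontent : 0 ≤ ∑ i : Fin l,
      (lam i : ℤ) * ((lam i : ℤ) - 2 * (((i : ℕ) : ℤ) + 1) + 1)) :
    ∃ r : ℕ, 0 < r ∧
      ∀ P Q : Fin l → Finset (Fin n),
        (∀ i, (P i).card = lam i) → (∀ i, (Q i).card = lam i) →
        (∀ i j, i ≠ j → Disjoint (P i) (P j)) →
        (∀ i j, i ≠ j → Disjoint (Q i) (Q j)) →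
        Finset.univ.biUnion P = Finset.univ →
        Finset.univ.biUnion Q = Finset.univ →
        {y ∈ Y | ∀ i, (P i).image (⇑y) = Q i}.ncard = r := by
  classical
  open TilingAux in
  by_cases hne : Nonempty (OSP n l lam)
  · -- convert the content hypothesis to ℚ
    have hcont : 0 ≤ ∑ i : Fin l, (lam i : ℚ) * ((lam i : ℚ) - 2 * ((i : ℕ) : ℚ) - 1) := by
      have h1 : (0:ℚ) ≤ ((∑ i : Fin l,
          (lam i : ℤ) * ((lam i : ℤ) - 2 * (((i : ℕ) : ℤ) + 1) + 1) : ℤ) : ℚ) := by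
        exact_mod_cast hcontent
      refine le_trans h1 (le_of_eq ?_)
      push_cast
      apply Finset.sum_congr rfl
      intro i _
      ring
    obtain ⟨P₀⟩ := hne
    have hcardpos : 0 < Fintype.card (OSP n l lam) := Fintype.card_pos_iff.mpr ⟨P₀⟩
    -- Y is nonempty
    obtain ⟨⟨t₀, y₀⟩, ⟨_, hy₀, _⟩, _⟩ := hT 1
    have hYcard : 0 < (Finset.univ.filter (fun y : Equiv.Perm (Fin n) => y ∈ Y)).card := by
      apply Finset.card_pos.mpr
      exact ⟨y₀, Finset.mem_filter.mpr ⟨Finset.mem_univ _, hy₀⟩⟩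
    refine ⟨cnt Y P₀ P₀, ?_, ?_⟩
    · by_contra h0
      push_neg at h0
      have h0' : cnt Y P₀ P₀ = 0 := Nat.le_zero.mp h0
      have htot := cnt_total Y P₀
      have hzero : ∑ Q : OSP n l lam, cnt Y P₀ Q = 0 := by
        apply Finset.sum_eq_zero
        intro Q _
        rw [cnt_const hT hcont P₀ Q P₀, h0']
      rw [hzero] at htot
      omega
    · intro P Q hP1 hQ1 hPd hQd hPc hQc
      set Ps : OSP n l lam := ⟨P, hP1, hPd, hPc⟩ with hPs
      set Qs : OSP n l lam := ⟨Q, hQ1, hQd, hQc⟩ with hQs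
      have hset : {y ∈ Y | ∀ i, (P i).image (⇑y) = Q i}
          = ↑(Finset.univ.filter (fun y : Equiv.Perm (Fin n) => y ∈ Y ∧ actO y Ps = Qs)) := by
        apply Set.ext
        intro y
        simp only [Set.mem_setOf_eq, Finset.coe_filter, Finset.mem_univ, true_and,
          Set.mem_setOf_eq]
        constructor
        · rintro ⟨h1, h2⟩
          refine ⟨h1, Subtype.ext (funext fun i => h2 i)⟩
        · rintro ⟨h1, h2⟩
          exact ⟨h1, fun i => congrFun (congrArg Subtype.val h2) i⟩
      rw [hset, Set.ncard_coe_finset]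
      show cnt Y Ps Qs = cnt Y P₀ P₀
      -- both counts times card OSP equal the cardinality of Y
      have h1 : ∑ R : OSP n l lam, cnt Y Ps R = ∑ R : OSP n l lam, cnt Y P₀ R := by
        rw [cnt_total, cnt_total]
      have h2 : ∑ R : OSP n l lam, cnt Y Ps R
          = Fintype.card (OSP n l lam) * cnt Y Ps Qs := by
        rw [Finset.sum_congr rfl (fun R _ => cnt_const hT hcont Ps R Qs),
          Finset.sum_const, Finset.card_univ, smul_eq_mul]
      have h3 : ∑ R : OSP n l lam, cnt Y P₀ R
          = Fintype.card (OSP n l lam) * cnt Y P₀ P₀ := by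
        rw [Finset.sum_congr rfl (fun R _ => cnt_const hT hcont P₀ R P₀),
          Finset.sum_const, Finset.card_univ, smul_eq_mul]
      rw [h2, h3] at h1
      exact Nat.eq_of_mul_eq_mul_left hcardpos h1
  · refine ⟨1, one_pos, ?_⟩
    intro P Q hP1 hQ1 hPd hQd hPc hQc
    exact absurd ⟨⟨P, hP1, hPd, hPc⟩⟩ hne
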